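/- arXiv:2501.08770 — 2 statements merged into one kernel-verified Lean document; each statement's English description precedes it below -/
import Mathlib

section
/- In the control framework, under the continuity assumptions on P^0 (in (a,μ)), on f^0 and g^0, and on P^1, f^1 and g^1, the set-valued mapping D : 𝒜^0×C_μ → 2^𝒱, D(α^0,μ) := B(α^0,μ) ∩ C(α^0,μ), has a closed graph: if (α^{0,n},μ^n) → (α^0,μ) in 𝒜^0×C_μ and v^n ∈ D(α^{0,n},μ^n) with v^n → v in 𝒱, then v ∈ D(α^0,μ). -/
open MeasureTheory Filter Topology
open scoped NNReal ENNReal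

section ControlFramework

variable {S W A0 A1 : Type*}
variable [MetricSpace S] [CompactSpace S] [Nonempty S]
  [MeasurableSpace S] [BorelSpace S] [SecondCountableTopology S]
variable [Fintype W] [Nonempty W] [TopologicalSpace W] [DiscreteTopology W]
  [MeasurableSpace W] [BorelSpace W]
variable [MetricSpace A0] [CompactSpace A0] [Nonempty A0] [MeasurableSpace A0] [BorelSpace A0]
variable [MetricSpace A1] [CompactSpace A1] [Nonempty A1] [MeasurableSpace A1] [BorelSpace A1]
  [SecondCountableTopology A1]
variable {T : ℕ}

variable (P0c : Fin T → W → A0 → ProbabilityMeasure (S × A1) → ProbabilityMeasure W)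
variable (P1c : Fin T → S → W → A1 → ProbabilityMeasure (S × A1) → ProbabilityMeasure S)
variable (f1 : Fin T → S → W → A1 → ProbabilityMeasure (S × A1) → ℝ)
variable (g1 : S → W → ProbabilityMeasure S → ℝ)

/-- `π⁰_{t+1}(u,{u'};α⁰_t(u),μ_t(u)) = ∫_{A⁰} P⁰_{t+1}(u,a,μ_t(u),{u'}) α⁰_t(u)(da)`. -/
noncomputable def pi0c (t : Fin T) (u : W) (α : ProbabilityMeasure A0)
    (μ : ProbabilityMeasure (S × A1)) (u' : W) : ℝ :=
  ∫ a, ((P0c t u a μ : Measure W) {u'}).toReal ∂(α : Measure A0)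

/-- The minor player's value function by backward induction, indexed by the number `j` of
periods remaining before the horizon `T`: `Vauxc α⁰ μ j = V^{1,α⁰,μ}_{T-j}`, solving the
Bellman equation
`V_t(x,u) = max_{a∈A¹} { f¹_t(x,u,a,μ_t(u)) + ∫ V_{t+1}(x',u') π_{t+1}(x,u,a;α⁰_t(u),μ_t(u);dx',du') }`
with terminal condition `V_T(x,u) = g¹(x,u,μ_T(u))`. -/
noncomputable def Vauxc (α0 : Fin T → W → ProbabilityMeasure A0)
    (μf : (Fin T → W → ProbabilityMeasure (S × A1)) × (W → ProbabilityMeasure S)) :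
    ℕ → S → W → ℝ
  | 0, x, u => g1 x u (μf.2 u)
  | (j + 1), x, u =>
      if h : T - (j + 1) < T then
        ⨆ a : A1,
          (f1 ⟨T - (j + 1), h⟩ x u a (μf.1 ⟨T - (j + 1), h⟩ u) +
            ∑ u' : W, pi0c P0c ⟨T - (j + 1), h⟩ u (α0 ⟨T - (j + 1), h⟩ u)
                (μf.1 ⟨T - (j + 1), h⟩ u) u' *
              ∫ x', Vauxc α0 μf j x' u'
                ∂(P1c ⟨T - (j + 1), h⟩ x u a (μf.1 ⟨T - (j + 1), h⟩ u) : Measure S))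
      else g1 x u (μf.2 u)

/-- The minor player's value function `V^{1,α⁰,μ}_t` at calendar time `t`. -/
noncomputable def Vtimec (α0 : Fin T → W → ProbabilityMeasure A0)
    (μf : (Fin T → W → ProbabilityMeasure (S × A1)) × (W → ProbabilityMeasure S))
    (t : ℕ) (x : S) (u : W) : ℝ :=
  Vauxc P0c P1c f1 g1 α0 μf (T - t) x u

/-- The Bellman integrand at time `t`:
`Q_t(x,u,a) = f¹_t(x,u,a,μ_t(u)) + ∫ V^{1,α⁰,μ}_{t+1} dπ_{t+1}(x,u,a;α⁰_t(u),μ_t(u))`. -/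
noncomputable def Qfun (α0 : Fin T → W → ProbabilityMeasure A0)
    (μf : (Fin T → W → ProbabilityMeasure (S × A1)) × (W → ProbabilityMeasure S))
    (t : Fin T) (x : S) (u : W) (a : A1) : ℝ :=
  f1 t x u a (μf.1 t u) +
    ∑ u' : W, pi0c P0c t u (α0 t u) (μf.1 t u) u' *
      ∫ x', Vtimec P0c P1c f1 g1 α0 μf ((t : ℕ) + 1) x' u'
        ∂(P1c t x u a (μf.1 t u) : Measure S)

/-- `B(α⁰,μ)`: state-action flows giving full mass, at each time, to the set of
Bellman maximizers. -/
def Bset (α0 : Fin T → W → ProbabilityMeasure A0)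
    (μf : (Fin T → W → ProbabilityMeasure (S × A1)) × (W → ProbabilityMeasure S)) :
    Set ((Fin T → ProbabilityMeasure (S × W × A1)) × ProbabilityMeasure (S × W)) :=
  {v | ∀ t : Fin T,
    (v.1 t : Measure (S × W × A1))
      {q : S × W × A1 | Qfun P0c P1c f1 g1 α0 μf t q.1 q.2.1 q.2.2 =
        ⨆ a' : A1, Qfun P0c P1c f1 g1 α0 μf t q.1 q.2.1 a'} = 1}

/-- One-step transition applied to a test function `f` on `S × W`:
`(x,u,a) ↦ ∫_{S×W} f dπ_{t+1}(x,u,a;α⁰_t(u),μ_t(u))`. -/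
noncomputable def stepTest (α0 : Fin T → W → ProbabilityMeasure A0)
    (μf : (Fin T → W → ProbabilityMeasure (S × A1)) × (W → ProbabilityMeasure S))
    (t : Fin T) (f : S → W → ℝ) (q : S × W × A1) : ℝ :=
  ∑ u' : W, pi0c P0c t q.2.1 (α0 t q.2.1) (μf.1 t q.2.1) u' *
    ∫ x', f x' u' ∂(P1c t q.1 q.2.1 q.2.2 (μf.1 t q.2.1) : Measure S)

/-- `C(α⁰,μ)`: state-action flows consistent with the controlled dynamics and the
initial law `m₀*` (expressed through bounded continuous test functions). -/
def Cset (m0 : ProbabilityMeasure (S × W))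
    (α0 : Fin T → W → ProbabilityMeasure A0)
    (μf : (Fin T → W → ProbabilityMeasure (S × A1)) × (W → ProbabilityMeasure S)) :
    Set ((Fin T → ProbabilityMeasure (S × W × A1)) × ProbabilityMeasure (S × W)) :=
  {v |
    (∀ h : 0 < T, ∀ f : S → W → ℝ, Continuous (fun q : S × W => f q.1 q.2) →
      ∫ q : S × W × A1, f q.1 q.2.1 ∂(v.1 ⟨0, h⟩ : Measure (S × W × A1)) =
        ∫ q : S × W, f q.1 q.2 ∂(m0 : Measure (S × W))) ∧
    (∀ (t : Fin T) (h : (t : ℕ) + 1 < T),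
      ∀ f : S → W → ℝ, Continuous (fun q : S × W => f q.1 q.2) →
      ∫ q : S × W × A1, f q.1 q.2.1 ∂(v.1 ⟨(t : ℕ) + 1, h⟩ : Measure (S × W × A1)) =
        ∫ q, stepTest P0c P1c α0 μf t f q ∂(v.1 t : Measure (S × W × A1))) ∧
    (∀ h : 0 < T, ∀ f : S → W → ℝ, Continuous (fun q : S × W => f q.1 q.2) →
      ∫ q : S × W, f q.1 q.2 ∂(v.2 : Measure (S × W)) =
        ∫ q, stepTest P0c P1c α0 μf ⟨T - 1, Nat.sub_lt h Nat.one_pos⟩ f q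
          ∂(v.1 ⟨T - 1, Nat.sub_lt h Nat.one_pos⟩ : Measure (S × W × A1)))}

/-- `D(α⁰,μ) = B(α⁰,μ) ∩ C(α⁰,μ)`: the optimal state-action flows of the minor player. -/
def Dset (m0 : ProbabilityMeasure (S × W))
    (α0 : Fin T → W → ProbabilityMeasure A0)
    (μf : (Fin T → W → ProbabilityMeasure (S × A1)) × (W → ProbabilityMeasure S)) :
    Set ((Fin T → ProbabilityMeasure (S × W × A1)) × ProbabilityMeasure (S × W)) :=
  Bset P0c P1c f1 g1 α0 μf ∩ Cset P0c P1c m0 α0 μf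

/-- The conditioning mapping `Γ : 𝒱 → 2^{C_μ}`, sending a state-action flow `v` to all
mean-field flows `μ` obtained by disintegrating `v` over the major player's coordinate:
`v_t(dx,du,da) = μ_t(u)(dx,da) (v_t|_W)(du)` for `t < T` and
`v_T(dx,du) = μ_T(u)(dx) (v_T|_W)(du)`. -/
def Gammac (v : (Fin T → ProbabilityMeasure (S × W × A1)) × ProbabilityMeasure (S × W)) :
    Set ((Fin T → W → ProbabilityMeasure (S × A1)) × (W → ProbabilityMeasure S)) :=
  {μf | (∀ (t : Fin T) (u : W) (B : Set (S × A1)), MeasurableSet B →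
      (v.1 t : Measure (S × W × A1)) {q : S × W × A1 | (q.1, q.2.2) ∈ B ∧ q.2.1 = u} =
        (μf.1 t u : Measure (S × A1)) B *
          (v.1 t : Measure (S × W × A1)) {q : S × W × A1 | q.2.1 = u}) ∧
    (∀ (u : W) (B : Set S), MeasurableSet B →
      (v.2 : Measure (S × W)) (B ×ˢ ({u} : Set W)) =
        (μf.2 u : Measure S) B *
          (v.2 : Measure (S × W)) (Set.univ ×ˢ ({u} : Set W)))}

end ControlFramework
set_option linter.unusedSectionVars false
set_option synthInstance.maxSize 2000
set_option maxHeartbeats 1000000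
open BoundedContinuousFunction

section Aux

lemma integrable_of_cont {X : Type*} [TopologicalSpace X] [CompactSpace X] [MeasurableSpace X]
    [OpensMeasurableSpace X] (μ : Measure X) [IsFiniteMeasure μ] {f : X → ℝ}
    (hf : Continuous f) : Integrable f μ :=
  (mkOfCompact ⟨f, hf⟩ : X →ᵇ ℝ).integrable μ

lemma continuous_integral_param {P X : Type*} [TopologicalSpace P] [TopologicalSpace X]
    [CompactSpace X] [MeasurableSpace X] [OpensMeasurableSpace X]
    {f : P → X → ℝ} (hf : Continuous fun q : P × X => f q.1 q.2)
    {ν : P → ProbabilityMeasure X} (hν : Continuous ν) :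
    Continuous fun p => ∫ x, f p x ∂(ν p : Measure X) := by
  set F : P → X →ᵇ ℝ :=
    fun p => mkOfCompact ((ContinuousMap.mk (fun q : P × X => f q.1 q.2) hf).curry p) with hF
  have hFapp : ∀ p x, F p x = f p x := fun p x => rfl
  have hFc : Continuous F :=
    (ContinuousMap.isometryEquivBoundedOfCompact X ℝ).continuous.comp
      (ContinuousMap.curry _).continuous
  rw [continuous_iff_continuousAt]
  intro p₀
  have h1 : Tendsto (fun p => dist (F p) (F p₀)) (𝓝 p₀) (𝓝 0) :=
    tendsto_iff_dist_tendsto_zero.mp hFc.continuousAt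
  have h2 : Tendsto (fun p => dist (∫ x, f p₀ x ∂(ν p : Measure X))
      (∫ x, f p₀ x ∂(ν p₀ : Measure X))) (𝓝 p₀) (𝓝 0) := by
    have key : Tendsto (fun p => ∫ x, (F p₀) x ∂((ν p) : Measure X)) (𝓝 p₀)
        (𝓝 (∫ x, (F p₀) x ∂((ν p₀) : Measure X))) :=
      (ProbabilityMeasure.tendsto_iff_forall_integral_tendsto.mp hν.continuousAt) (F p₀)
    simpa [hFapp] using tendsto_iff_dist_tendsto_zero.mp key
  have hb : ∀ p, dist (∫ x, f p x ∂(ν p : Measure X)) (∫ x, f p₀ x ∂(ν p₀ : Measure X)) ≤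
      dist (F p) (F p₀) + dist (∫ x, f p₀ x ∂(ν p : Measure X))
        (∫ x, f p₀ x ∂(ν p₀ : Measure X)) := by
    intro p
    refine (dist_triangle _ (∫ x, f p₀ x ∂(ν p : Measure X)) _).trans
      (add_le_add ?_ le_rfl)
    have hint : (∫ x, f p x ∂(ν p : Measure X)) - (∫ x, f p₀ x ∂(ν p : Measure X)) =
        ∫ x, ((F p - F p₀ : X →ᵇ ℝ)) x ∂(ν p : Measure X) := by
      rw [← integral_sub
        (integrable_of_cont _ (show Continuous fun x => f p x from hf.comp (Continuous.prodMk_right p)))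
        (integrable_of_cont _ (show Continuous fun x => f p₀ x from
          hf.comp (Continuous.prodMk_right p₀)))]
      simp [hFapp]
    rw [dist_eq_norm, hint, dist_eq_norm]
    exact (F p - F p₀).norm_integral_le_norm _
  have key : Tendsto (fun p => dist (∫ x, f p x ∂(ν p : Measure X))
      (∫ x, f p₀ x ∂(ν p₀ : Measure X))) (𝓝 p₀) (𝓝 0) :=
    squeeze_zero (fun p => dist_nonneg) hb (by simpa using h1.add h2)
  exact tendsto_iff_dist_tendsto_zero.mpr key

lemma continuous_iSup_param {P A : Type*} [TopologicalSpace P] [TopologicalSpace A]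
    [CompactSpace A] [Nonempty A]
    {F : P → A → ℝ} (hF : Continuous fun q : P × A => F q.1 q.2) :
    Continuous fun p => ⨆ a, F p a := by
  set G : P → A →ᵇ ℝ :=
    fun p => mkOfCompact ((ContinuousMap.mk (fun q : P × A => F q.1 q.2) hF).curry p) with hG
  have hGapp : ∀ p a, G p a = F p a := fun p a => rfl
  have hGc : Continuous G :=
    (ContinuousMap.isometryEquivBoundedOfCompact A ℝ).continuous.comp
      (ContinuousMap.curry _).continuous
  have hsup : ∀ g h : A →ᵇ ℝ, (⨆ a, g a) ≤ (⨆ a, h a) + dist g h := by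
    intro g h
    refine ciSup_le fun a => ?_
    have h1 : g a ≤ h a + dist g h := by
      have := dist_coe_le_dist (f := g) (g := h) a
      rw [Real.dist_eq] at this
      linarith [abs_le.mp this]
    exact h1.trans (add_le_add
      (le_ciSup (isCompact_range h.continuous).bddAbove a) le_rfl)
  have hlip : LipschitzWith 1 (fun g : A →ᵇ ℝ => ⨆ a, g a) := by
    refine LipschitzWith.of_dist_le_mul fun g h => ?_
    rw [NNReal.coe_one, one_mul, Real.dist_eq, abs_sub_le_iff]
    constructor
    · linarith [hsup g h]
    · linarith [hsup h g, dist_comm g h]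
  have : (fun p => ⨆ a, F p a) = (fun g : A →ᵇ ℝ => ⨆ a, g a) ∘ G := by
    funext p; simp [hGapp]
  rw [this]
  exact hlip.continuous.comp hGc

lemma continuous_integral_PM {X : Type*} [TopologicalSpace X] [CompactSpace X]
    [MeasurableSpace X] [OpensMeasurableSpace X] {g : X → ℝ} (hg : Continuous g) :
    Continuous fun ν : ProbabilityMeasure X => ∫ x, g x ∂(ν : Measure X) :=
  continuous_integral_param (f := fun _ x => g x) (hg.comp continuous_snd) continuous_id

lemma continuous_discrete_fiber {Z W' : Type*} [TopologicalSpace Z] [Fintype W']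
    [TopologicalSpace W'] [DiscreteTopology W'] {g : Z → W'} (hg : Continuous g)
    {F : W' → Z → ℝ} (hF : ∀ u, Continuous (F u)) :
    Continuous fun z => F (g z) z := by
  classical
  have : (fun z => F (g z) z) = fun z => ∑ u : W', (if g z = u then (1:ℝ) else 0) * F u z := by
    funext z
    simp only [ite_mul, one_mul, zero_mul]
    rw [Finset.sum_ite_eq Finset.univ (g z) (fun u => F u z)]
    simp
  rw [this]
  refine continuous_finset_sum _ fun u _ => Continuous.mul ?_ (hF u)
  exact (continuous_of_discreteTopology (f := fun w : W' => if w = u then (1:ℝ) else 0)).comp hg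

end Aux

section D17

variable {S W A0 A1 : Type*}
variable [MetricSpace S] [CompactSpace S] [Nonempty S]
  [MeasurableSpace S] [BorelSpace S] [SecondCountableTopology S]
variable [Fintype W] [Nonempty W] [TopologicalSpace W] [DiscreteTopology W]
  [MeasurableSpace W] [BorelSpace W]
variable [MetricSpace A0] [CompactSpace A0] [Nonempty A0] [MeasurableSpace A0] [BorelSpace A0]
variable [MetricSpace A1] [CompactSpace A1] [Nonempty A1] [MeasurableSpace A1] [BorelSpace A1]
  [SecondCountableTopology A1]
variable {T : ℕ}
variable (P0c : Fin T → W → A0 → ProbabilityMeasure (S × A1) → ProbabilityMeasure W)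
variable (P1c : Fin T → S → W → A1 → ProbabilityMeasure (S × A1) → ProbabilityMeasure S)
variable (f1 : Fin T → S → W → A1 → ProbabilityMeasure (S × A1) → ℝ)
variable (g1 : S → W → ProbabilityMeasure S → ℝ)

lemma continuous_PM_singleton (u : W) :
    Continuous fun ν : ProbabilityMeasure W => ((ν : Measure W) {u}).toReal := by
  classical
  have h : ∀ ν : ProbabilityMeasure W, ((ν : Measure W) {u}).toReal
      = ∫ w, (if w = u then (1:ℝ) else 0) ∂(ν : Measure W) := by
    intro ν
    have he : (fun w => if w = u then (1:ℝ) else 0) = Set.indicator {u} (fun _ => (1:ℝ)) := by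
      funext w; simp [Set.indicator_apply]
    rw [he, integral_indicator_const (1:ℝ) (measurableSet_singleton u)]
    simp
    rfl
  simp_rw [h]
  exact continuous_integral_PM continuous_of_discreteTopology

lemma continuous_pi0c
    (hP0c : ∀ (t : Fin T) (u : W), Continuous fun z : A0 × ProbabilityMeasure (S × A1) =>
      P0c t u z.1 z.2) (t : Fin T) (u u' : W) :
    Continuous fun z : ProbabilityMeasure A0 × ProbabilityMeasure (S × A1) =>
      pi0c P0c t u z.1 z.2 u' := by
  simp only [pi0c]
  exact continuous_integral_param
    (f := fun (z : ProbabilityMeasure A0 × ProbabilityMeasure (S × A1)) (a : A0) =>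
      ((P0c t u a z.2 : Measure W) {u'}).toReal)
    ((continuous_PM_singleton u').comp
      ((hP0c t u).comp (continuous_snd.prodMk (continuous_snd.comp continuous_fst))))
    continuous_fst

lemma continuous_vauxc
    (hP1c : ∀ (t : Fin T) (u : W), Continuous fun z : S × A1 × ProbabilityMeasure (S × A1) =>
      P1c t z.1 u z.2.1 z.2.2)
    (hP0c : ∀ (t : Fin T) (u : W), Continuous fun z : A0 × ProbabilityMeasure (S × A1) =>
      P0c t u z.1 z.2)
    (hf1 : ∀ (t : Fin T) (u : W), Continuous fun z : S × A1 × ProbabilityMeasure (S × A1) =>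
      f1 t z.1 u z.2.1 z.2.2)
    (hg1 : ∀ u : W, Continuous fun z : S × ProbabilityMeasure S => g1 z.1 u z.2)
    (j : ℕ) :
    ∀ u : W, Continuous fun z :
      ((Fin T → W → ProbabilityMeasure A0) ×
        ((Fin T → W → ProbabilityMeasure (S × A1)) × (W → ProbabilityMeasure S))) × S =>
      Vauxc P0c P1c f1 g1 z.1.1 z.1.2 j z.2 u := by
  induction j with
  | zero =>
    intro u
    simp only [Vauxc]
    exact (hg1 u).comp (continuous_snd.prodMk
      ((continuous_apply u).comp (continuous_snd.comp (continuous_snd.comp continuous_fst))))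
  | succ j ih =>
    intro u
    by_cases h : T - (j+1) < T
    · have he : (fun z :
          ((Fin T → W → ProbabilityMeasure A0) ×
            ((Fin T → W → ProbabilityMeasure (S × A1)) × (W → ProbabilityMeasure S))) × S =>
            Vauxc P0c P1c f1 g1 z.1.1 z.1.2 (j+1) z.2 u) =
          fun z => ⨆ a : A1,
            (f1 ⟨T-(j+1), h⟩ z.2 u a (z.1.2.1 ⟨T-(j+1), h⟩ u) +
              ∑ u' : W, pi0c P0c ⟨T-(j+1), h⟩ u (z.1.1 ⟨T-(j+1), h⟩ u)
                  (z.1.2.1 ⟨T-(j+1), h⟩ u) u' *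
                ∫ x', Vauxc P0c P1c f1 g1 z.1.1 z.1.2 j x' u'
                  ∂(P1c ⟨T-(j+1), h⟩ z.2 u a (z.1.2.1 ⟨T-(j+1), h⟩ u) : Measure S)) := by
        funext z; simp only [Vauxc, dif_pos h]
      rw [he]
      set t : Fin T := ⟨T-(j+1), h⟩ with ht
      have cμ : Continuous fun q :
          (((Fin T → W → ProbabilityMeasure A0) ×
            ((Fin T → W → ProbabilityMeasure (S × A1)) × (W → ProbabilityMeasure S))) × S) × A1 =>
          q.1.1.2.1 t u :=
        (continuous_apply u).comp ((continuous_apply t).comp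
          (continuous_fst.comp (continuous_snd.comp (continuous_fst.comp continuous_fst))))
      have cα : Continuous fun q :
          (((Fin T → W → ProbabilityMeasure A0) ×
            ((Fin T → W → ProbabilityMeasure (S × A1)) × (W → ProbabilityMeasure S))) × S) × A1 =>
          q.1.1.1 t u :=
        (continuous_apply u).comp ((continuous_apply t).comp
          (continuous_fst.comp (continuous_fst.comp continuous_fst)))
      apply continuous_iSup_param
      apply Continuous.add
      · exact (hf1 t u).comp ((continuous_snd.comp continuous_fst).prodMk
          (continuous_snd.prodMk cμ))
      · refine continuous_finset_sum _ fun u' _ => Continuous.mul ?_ ?_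
        · exact (continuous_pi0c P0c hP0c t u u').comp (cα.prodMk cμ)
        · refine continuous_integral_param
            (f := fun (q :
              (((Fin T → W → ProbabilityMeasure A0) ×
                ((Fin T → W → ProbabilityMeasure (S × A1)) × (W → ProbabilityMeasure S))) × S) × A1)
              (x' : S) => Vauxc P0c P1c f1 g1 q.1.1.1 q.1.1.2 j x' u')
            ?_ ((hP1c t u).comp ((continuous_snd.comp continuous_fst).prodMk
              (continuous_snd.prodMk cμ)))
          exact (ih u').comp
            (((continuous_fst.comp (continuous_fst.comp continuous_fst)).prodMk continuous_snd))
    · have he : (fun z :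
          ((Fin T → W → ProbabilityMeasure A0) ×
            ((Fin T → W → ProbabilityMeasure (S × A1)) × (W → ProbabilityMeasure S))) × S =>
            Vauxc P0c P1c f1 g1 z.1.1 z.1.2 (j+1) z.2 u) =
          fun z => g1 z.2 u (z.1.2.2 u) := by
        funext z; simp only [Vauxc, dif_neg h]
      rw [he]
      exact (hg1 u).comp (continuous_snd.prodMk
        ((continuous_apply u).comp (continuous_snd.comp (continuous_snd.comp continuous_fst))))

lemma continuous_qfun
    (hP1c : ∀ (t : Fin T) (u : W), Continuous fun z : S × A1 × ProbabilityMeasure (S × A1) =>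
      P1c t z.1 u z.2.1 z.2.2)
    (hP0c : ∀ (t : Fin T) (u : W), Continuous fun z : A0 × ProbabilityMeasure (S × A1) =>
      P0c t u z.1 z.2)
    (hf1 : ∀ (t : Fin T) (u : W), Continuous fun z : S × A1 × ProbabilityMeasure (S × A1) =>
      f1 t z.1 u z.2.1 z.2.2)
    (hg1 : ∀ u : W, Continuous fun z : S × ProbabilityMeasure S => g1 z.1 u z.2)
    (t : Fin T) (u : W) :
    Continuous fun z :
      ((Fin T → W → ProbabilityMeasure A0) ×
        ((Fin T → W → ProbabilityMeasure (S × A1)) × (W → ProbabilityMeasure S))) × (S × A1) =>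
      Qfun P0c P1c f1 g1 z.1.1 z.1.2 t z.2.1 u z.2.2 := by
  simp only [Qfun, Vtimec]
  have cμ : Continuous fun z :
      ((Fin T → W → ProbabilityMeasure A0) ×
        ((Fin T → W → ProbabilityMeasure (S × A1)) × (W → ProbabilityMeasure S))) × (S × A1) =>
      z.1.2.1 t u :=
    (continuous_apply u).comp ((continuous_apply t).comp
      (continuous_fst.comp (continuous_snd.comp continuous_fst)))
  have cα : Continuous fun z :
      ((Fin T → W → ProbabilityMeasure A0) ×
        ((Fin T → W → ProbabilityMeasure (S × A1)) × (W → ProbabilityMeasure S))) × (S × A1) =>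
      z.1.1 t u :=
    (continuous_apply u).comp ((continuous_apply t).comp
      (continuous_fst.comp continuous_fst))
  have cx : Continuous fun z :
      ((Fin T → W → ProbabilityMeasure A0) ×
        ((Fin T → W → ProbabilityMeasure (S × A1)) × (W → ProbabilityMeasure S))) × (S × A1) =>
      z.2.1 := continuous_fst.comp continuous_snd
  have ca : Continuous fun z :
      ((Fin T → W → ProbabilityMeasure A0) ×
        ((Fin T → W → ProbabilityMeasure (S × A1)) × (W → ProbabilityMeasure S))) × (S × A1) =>
      z.2.2 := continuous_snd.comp continuous_snd
  apply Continuous.add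
  · exact (hf1 t u).comp (cx.prodMk (ca.prodMk cμ))
  · refine continuous_finset_sum _ fun u' _ => Continuous.mul ?_ ?_
    · exact (continuous_pi0c P0c hP0c t u u').comp (cα.prodMk cμ)
    · refine continuous_integral_param
        (f := fun (z :
          ((Fin T → W → ProbabilityMeasure A0) ×
            ((Fin T → W → ProbabilityMeasure (S × A1)) × (W → ProbabilityMeasure S))) × (S × A1))
          (x' : S) => Vauxc P0c P1c f1 g1 z.1.1 z.1.2 (T - ((t : ℕ) + 1)) x' u')
        ?_ ((hP1c t u).comp (cx.prodMk (ca.prodMk cμ)))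
      exact (continuous_vauxc P0c P1c f1 g1 hP1c hP0c hf1 hg1 (T - ((t : ℕ) + 1)) u').comp
        ((continuous_fst.comp continuous_fst).prodMk continuous_snd)

lemma continuous_supq
    (hP1c : ∀ (t : Fin T) (u : W), Continuous fun z : S × A1 × ProbabilityMeasure (S × A1) =>
      P1c t z.1 u z.2.1 z.2.2)
    (hP0c : ∀ (t : Fin T) (u : W), Continuous fun z : A0 × ProbabilityMeasure (S × A1) =>
      P0c t u z.1 z.2)
    (hf1 : ∀ (t : Fin T) (u : W), Continuous fun z : S × A1 × ProbabilityMeasure (S × A1) =>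
      f1 t z.1 u z.2.1 z.2.2)
    (hg1 : ∀ u : W, Continuous fun z : S × ProbabilityMeasure S => g1 z.1 u z.2)
    (t : Fin T) (u : W) :
    Continuous fun z :
      ((Fin T → W → ProbabilityMeasure A0) ×
        ((Fin T → W → ProbabilityMeasure (S × A1)) × (W → ProbabilityMeasure S))) × S =>
      ⨆ a' : A1, Qfun P0c P1c f1 g1 z.1.1 z.1.2 t z.2 u a' := by
  apply continuous_iSup_param
  exact (continuous_qfun P0c P1c f1 g1 hP1c hP0c hf1 hg1 t u).comp
    ((continuous_fst.comp continuous_fst).prodMk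
      ((continuous_snd.comp continuous_fst).prodMk continuous_snd))

lemma continuous_gap
    (hP1c : ∀ (t : Fin T) (u : W), Continuous fun z : S × A1 × ProbabilityMeasure (S × A1) =>
      P1c t z.1 u z.2.1 z.2.2)
    (hP0c : ∀ (t : Fin T) (u : W), Continuous fun z : A0 × ProbabilityMeasure (S × A1) =>
      P0c t u z.1 z.2)
    (hf1 : ∀ (t : Fin T) (u : W), Continuous fun z : S × A1 × ProbabilityMeasure (S × A1) =>
      f1 t z.1 u z.2.1 z.2.2)
    (hg1 : ∀ u : W, Continuous fun z : S × ProbabilityMeasure S => g1 z.1 u z.2)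
    (t : Fin T) :
    Continuous fun z :
      ((Fin T → W → ProbabilityMeasure A0) ×
        ((Fin T → W → ProbabilityMeasure (S × A1)) × (W → ProbabilityMeasure S))) ×
        (S × W × A1) =>
      (⨆ a' : A1, Qfun P0c P1c f1 g1 z.1.1 z.1.2 t z.2.1 z.2.2.1 a') -
        Qfun P0c P1c f1 g1 z.1.1 z.1.2 t z.2.1 z.2.2.1 z.2.2.2 := by
  exact continuous_discrete_fiber (g := fun z :
      ((Fin T → W → ProbabilityMeasure A0) ×
        ((Fin T → W → ProbabilityMeasure (S × A1)) × (W → ProbabilityMeasure S))) ×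
        (S × W × A1) => z.2.2.1)
    (continuous_fst.comp (continuous_snd.comp continuous_snd))
    (F := fun u z =>
      (⨆ a' : A1, Qfun P0c P1c f1 g1 z.1.1 z.1.2 t z.2.1 u a') -
        Qfun P0c P1c f1 g1 z.1.1 z.1.2 t z.2.1 u z.2.2.2)
    (fun u => Continuous.sub
      ((continuous_supq P0c P1c f1 g1 hP1c hP0c hf1 hg1 t u).comp
        (continuous_fst.prodMk (continuous_fst.comp continuous_snd)))
      ((continuous_qfun P0c P1c f1 g1 hP1c hP0c hf1 hg1 t u).comp
        (continuous_fst.prodMk ((continuous_fst.comp continuous_snd).prodMk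
          (continuous_snd.comp (continuous_snd.comp continuous_snd))))))

lemma continuous_stepTest
    (hP1c : ∀ (t : Fin T) (u : W), Continuous fun z : S × A1 × ProbabilityMeasure (S × A1) =>
      P1c t z.1 u z.2.1 z.2.2)
    (hP0c : ∀ (t : Fin T) (u : W), Continuous fun z : A0 × ProbabilityMeasure (S × A1) =>
      P0c t u z.1 z.2)
    (t : Fin T) {f : S → W → ℝ} (hf : Continuous fun q : S × W => f q.1 q.2) :
    Continuous fun z :
      ((Fin T → W → ProbabilityMeasure A0) ×
        ((Fin T → W → ProbabilityMeasure (S × A1)) × (W → ProbabilityMeasure S))) ×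
        (S × W × A1) =>
      stepTest P0c P1c z.1.1 z.1.2 t f z.2 := by
  simp only [stepTest]
  exact continuous_discrete_fiber (g := fun z :
      ((Fin T → W → ProbabilityMeasure A0) ×
        ((Fin T → W → ProbabilityMeasure (S × A1)) × (W → ProbabilityMeasure S))) ×
        (S × W × A1) => z.2.2.1)
    (continuous_fst.comp (continuous_snd.comp continuous_snd))
    (F := fun u z =>
      ∑ u' : W, pi0c P0c t u (z.1.1 t u) (z.1.2.1 t u) u' *
        ∫ x', f x' u' ∂(P1c t z.2.1 u z.2.2.2 (z.1.2.1 t u) : Measure S))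
    (fun u => by
      have cμ : Continuous fun z :
          ((Fin T → W → ProbabilityMeasure A0) ×
            ((Fin T → W → ProbabilityMeasure (S × A1)) × (W → ProbabilityMeasure S))) ×
            (S × W × A1) => z.1.2.1 t u :=
        (continuous_apply u).comp ((continuous_apply t).comp
          (continuous_fst.comp (continuous_snd.comp continuous_fst)))
      have cα : Continuous fun z :
          ((Fin T → W → ProbabilityMeasure A0) ×
            ((Fin T → W → ProbabilityMeasure (S × A1)) × (W → ProbabilityMeasure S))) ×
            (S × W × A1) => z.1.1 t u :=
        (continuous_apply u).comp ((continuous_apply t).comp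
          (continuous_fst.comp continuous_fst))
      refine continuous_finset_sum _ fun u' _ => Continuous.mul ?_ ?_
      · exact (continuous_pi0c P0c hP0c t u u').comp (cα.prodMk cμ)
      · refine continuous_integral_param
          (f := fun (z :
            ((Fin T → W → ProbabilityMeasure A0) ×
              ((Fin T → W → ProbabilityMeasure (S × A1)) × (W → ProbabilityMeasure S))) ×
              (S × W × A1)) (x' : S) => f x' u')
          (hf.comp (continuous_snd.prodMk continuous_const))
          ((hP1c t u).comp ((continuous_fst.comp continuous_snd).prodMk
            ((continuous_snd.comp (continuous_snd.comp continuous_snd)).prodMk cμ))))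

end D17

/-- In the control framework, under the continuity assumptions on `P⁰`
(in `(a,μ)`), on `f⁰` and `g⁰`, and on `P¹`, `f¹` and `g¹`, the set-valued mapping
`D : 𝒜⁰ × C_μ → 2^𝒱`, `D(α⁰,μ) = B(α⁰,μ) ∩ C(α⁰,μ)`, has a closed graph: if
`(α⁰ⁿ,μⁿ) → (α⁰,μ)` in `𝒜⁰ × C_μ` and `vⁿ ∈ D(α⁰ⁿ,μⁿ)` with `vⁿ → v` in `𝒱`, then
`v ∈ D(α⁰,μ)`. -/
theorem Dset_closedGraph
    {S W A0 A1 : Type*}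
    [MetricSpace S] [CompactSpace S] [Nonempty S]
    [MeasurableSpace S] [BorelSpace S] [SecondCountableTopology S]
    [Fintype W] [Nonempty W] [TopologicalSpace W] [DiscreteTopology W]
    [MeasurableSpace W] [BorelSpace W]
    [MetricSpace A0] [CompactSpace A0] [Nonempty A0] [MeasurableSpace A0] [BorelSpace A0]
    [MetricSpace A1] [CompactSpace A1] [Nonempty A1] [MeasurableSpace A1] [BorelSpace A1]
    [SecondCountableTopology A1]
    {T : ℕ}
    (P0c : Fin T → W → A0 → ProbabilityMeasure (S × A1) → ProbabilityMeasure W)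
    (P1c : Fin T → S → W → A1 → ProbabilityMeasure (S × A1) → ProbabilityMeasure S)
    (f1 : Fin T → S → W → A1 → ProbabilityMeasure (S × A1) → ℝ)
    (g1 : S → W → ProbabilityMeasure S → ℝ)
    -- continuity of the minor player's transition kernel in (x,a,μ)
    (hP1c : ∀ (t : Fin T) (u : W), Continuous fun z : S × A1 × ProbabilityMeasure (S × A1) =>
      P1c t z.1 u z.2.1 z.2.2)
    -- continuity of the major player's transition kernel in (a,μ)
    (hP0c : ∀ (t : Fin T) (u : W), Continuous fun z : A0 × ProbabilityMeasure (S × A1) =>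
      P0c t u z.1 z.2)
    -- continuity of the minor player's rewards
    (hf1 : ∀ (t : Fin T) (u : W), Continuous fun z : S × A1 × ProbabilityMeasure (S × A1) =>
      f1 t z.1 u z.2.1 z.2.2)
    (hg1 : ∀ u : W, Continuous fun z : S × ProbabilityMeasure S => g1 z.1 u z.2)
    -- continuity of the major player's rewards in (a,μ) resp. μ
    (f0c : Fin T → W → A0 → ProbabilityMeasure (S × A1) → ℝ)
    (g0c : W → ProbabilityMeasure S → ℝ)
    (hf0c : ∀ (t : Fin T) (u : W), Continuous fun z : A0 × ProbabilityMeasure (S × A1) =>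
      f0c t u z.1 z.2)
    (hg0c : ∀ u : W, Continuous fun ν : ProbabilityMeasure S => g0c u ν)
    (m0 : ProbabilityMeasure (S × W))
    (α0seq : ℕ → Fin T → W → ProbabilityMeasure A0)
    (α0 : Fin T → W → ProbabilityMeasure A0)
    (μseq : ℕ → (Fin T → W → ProbabilityMeasure (S × A1)) × (W → ProbabilityMeasure S))
    (μf : (Fin T → W → ProbabilityMeasure (S × A1)) × (W → ProbabilityMeasure S))
    (vseq : ℕ → (Fin T → ProbabilityMeasure (S × W × A1)) × ProbabilityMeasure (S × W))
    (v : (Fin T → ProbabilityMeasure (S × W × A1)) × ProbabilityMeasure (S × W))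
    (hα0 : Tendsto α0seq atTop (𝓝 α0))
    (hμ : Tendsto μseq atTop (𝓝 μf))
    (hv : ∀ n, vseq n ∈ Dset P0c P1c f1 g1 m0 (α0seq n) (μseq n))
    (hvlim : Tendsto vseq atTop (𝓝 v)) :
    v ∈ Dset P0c P1c f1 g1 m0 α0 μf := by

  classical
  have hp : Tendsto (fun n => (α0seq n, μseq n)) atTop (𝓝 (α0, μf)) := hα0.prodMk_nhds hμ
  have hv1 : ∀ t : Fin T, Tendsto (fun n => (vseq n).1 t) atTop (𝓝 (v.1 t)) := fun t =>
    (((continuous_apply t).comp continuous_fst).tendsto v).comp hvlim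
  have hv2 : Tendsto (fun n => (vseq n).2) atTop (𝓝 v.2) := (continuous_snd.tendsto v).comp hvlim
  constructor
  · -- Bset
    intro t
    have hgapc := continuous_gap P0c P1c f1 g1 hP1c hP0c hf1 hg1 t
    set gap : ((Fin T → W → ProbabilityMeasure A0) ×
        ((Fin T → W → ProbabilityMeasure (S × A1)) × (W → ProbabilityMeasure S))) →
        (S × W × A1) → ℝ :=
      fun p q => (⨆ a' : A1, Qfun P0c P1c f1 g1 p.1 p.2 t q.1 q.2.1 a') -
        Qfun P0c P1c f1 g1 p.1 p.2 t q.1 q.2.1 q.2.2 with hgapdef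
    have hgapc' : Continuous fun z : ((Fin T → W → ProbabilityMeasure A0) ×
        ((Fin T → W → ProbabilityMeasure (S × A1)) × (W → ProbabilityMeasure S))) ×
        (S × W × A1) => gap z.1 z.2 := hgapc
    have hset : ∀ (p : (Fin T → W → ProbabilityMeasure A0) ×
        ((Fin T → W → ProbabilityMeasure (S × A1)) × (W → ProbabilityMeasure S))),
        {q : S × W × A1 | Qfun P0c P1c f1 g1 p.1 p.2 t q.1 q.2.1 q.2.2 =
          ⨆ a' : A1, Qfun P0c P1c f1 g1 p.1 p.2 t q.1 q.2.1 a'} =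
        {q : S × W × A1 | gap p q = 0} := by
      intro p
      ext q
      simp only [Set.mem_setOf_eq, hgapdef, sub_eq_zero]
      exact eq_comm
    have hΦ : Continuous fun r : ((Fin T → W → ProbabilityMeasure A0) ×
        ((Fin T → W → ProbabilityMeasure (S × A1)) × (W → ProbabilityMeasure S))) ×
        ProbabilityMeasure (S × W × A1) =>
        ∫ q, gap r.1 q ∂(r.2 : Measure (S × W × A1)) :=
      continuous_integral_param (f := fun r q => gap r.1 q)
        (show Continuous fun rq : (((Fin T → W → ProbabilityMeasure A0) ×
            ((Fin T → W → ProbabilityMeasure (S × A1)) × (W → ProbabilityMeasure S))) ×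
            ProbabilityMeasure (S × W × A1)) × (S × W × A1) => gap rq.1.1 rq.2 from
          hgapc'.comp ((continuous_fst.comp continuous_fst).prodMk continuous_snd))
        continuous_snd
    have hconv : Tendsto
        (fun n => ∫ q, gap (α0seq n, μseq n) q ∂((vseq n).1 t : Measure (S × W × A1)))
        atTop (𝓝 (∫ q, gap (α0, μf) q ∂(v.1 t : Measure (S × W × A1)))) :=
      (hΦ.tendsto _).comp (hp.prodMk_nhds (hv1 t))
    have hzero : ∀ n, ∫ q, gap (α0seq n, μseq n) q ∂((vseq n).1 t : Measure (S × W × A1)) = 0 := by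
      intro n
      have hBn := (hv n).1 t
      rw [hset (α0seq n, μseq n)] at hBn
      have hcl : IsClosed {q : S × W × A1 | gap (α0seq n, μseq n) q = 0} :=
        isClosed_eq (hgapc'.comp ((Continuous.prodMk_right _))) continuous_const
      have hae : ∀ᵐ q ∂((vseq n).1 t : Measure (S × W × A1)), gap (α0seq n, μseq n) q = 0 := by
        rw [ae_iff]
        have : {q : S × W × A1 | ¬ gap (α0seq n, μseq n) q = 0} =
            {q : S × W × A1 | gap (α0seq n, μseq n) q = 0}ᶜ := rfl
        rw [this, prob_compl_eq_zero_iff hcl.measurableSet]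
        exact hBn
      exact integral_eq_zero_of_ae hae
    have hlim0' : ∫ q, gap (α0, μf) q ∂(v.1 t : Measure (S × W × A1)) = 0 := by
      refine tendsto_nhds_unique hconv ?_
      exact tendsto_const_nhds.congr fun n => (hzero n).symm
    have hcontlim : Continuous fun q : S × W × A1 => gap (α0, μf) q :=
      hgapc'.comp (Continuous.prodMk_right _)
    have hnn : 0 ≤ fun q : S × W × A1 => gap (α0, μf) q := by
      intro q
      simp only [hgapdef, Pi.zero_apply, sub_nonneg]
      refine le_ciSup ?_ q.2.2
      have hc : Continuous fun a' : A1 =>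
          Qfun P0c P1c f1 g1 α0 μf t q.1 q.2.1 a' := by
        exact (continuous_qfun P0c P1c f1 g1 hP1c hP0c hf1 hg1 t q.2.1).comp
          (show Continuous fun a' : A1 => ((α0, μf), (q.1, a')) from
            continuous_const.prodMk (continuous_const.prodMk continuous_id))
      exact (isCompact_range hc).bddAbove
    have hae0 : (fun q : S × W × A1 => gap (α0, μf) q) =ᵐ[(v.1 t : Measure (S × W × A1))] 0 :=
      (integral_eq_zero_iff_of_nonneg hnn (integrable_of_cont _ hcontlim)).mp hlim0'
    rw [hset (α0, μf)]
    rw [← prob_compl_eq_zero_iff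
      (isClosed_eq hcontlim continuous_const).measurableSet]
    have : {q : S × W × A1 | gap (α0, μf) q = 0}ᶜ =
        {q : S × W × A1 | ¬ gap (α0, μf) q = 0} := rfl
    rw [this, ← ae_iff]
    exact hae0
  · -- Cset
    refine ⟨?_, ?_, ?_⟩
    · intro hT f hf
      have hbig : Continuous fun q : S × W × A1 => f q.1 q.2.1 :=
        hf.comp (continuous_fst.prodMk (continuous_fst.comp continuous_snd))
      have hL : Tendsto
          (fun n => ∫ q, f q.1 q.2.1 ∂((vseq n).1 ⟨0, hT⟩ : Measure (S × W × A1)))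
          atTop (𝓝 (∫ q, f q.1 q.2.1 ∂(v.1 ⟨0, hT⟩ : Measure (S × W × A1)))) :=
        ((continuous_integral_PM hbig).tendsto _).comp (hv1 ⟨0, hT⟩)
      refine tendsto_nhds_unique (hL.congr fun n => (hv n).2.1 hT f hf) tendsto_const_nhds
    · intro t ht f hf
      have hbig : Continuous fun q : S × W × A1 => f q.1 q.2.1 :=
        hf.comp (continuous_fst.prodMk (continuous_fst.comp continuous_snd))
      have hL : Tendsto
          (fun n => ∫ q, f q.1 q.2.1 ∂((vseq n).1 ⟨(t : ℕ) + 1, ht⟩ : Measure (S × W × A1)))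
          atTop (𝓝 (∫ q, f q.1 q.2.1 ∂(v.1 ⟨(t : ℕ) + 1, ht⟩ : Measure (S × W × A1)))) :=
        ((continuous_integral_PM hbig).tendsto _).comp (hv1 ⟨(t : ℕ) + 1, ht⟩)
      have hS := continuous_stepTest P0c P1c hP1c hP0c t hf
      have hΦ : Continuous fun r : ((Fin T → W → ProbabilityMeasure A0) ×
          ((Fin T → W → ProbabilityMeasure (S × A1)) × (W → ProbabilityMeasure S))) ×
          ProbabilityMeasure (S × W × A1) =>
          ∫ q, stepTest P0c P1c r.1.1 r.1.2 t f q ∂(r.2 : Measure (S × W × A1)) :=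
        continuous_integral_param (f := fun (r : ((Fin T → W → ProbabilityMeasure A0) ×
            ((Fin T → W → ProbabilityMeasure (S × A1)) × (W → ProbabilityMeasure S))) ×
            ProbabilityMeasure (S × W × A1)) (q : S × W × A1) => stepTest P0c P1c r.1.1 r.1.2 t f q)
          (show Continuous fun rq : (((Fin T → W → ProbabilityMeasure A0) ×
              ((Fin T → W → ProbabilityMeasure (S × A1)) × (W → ProbabilityMeasure S))) ×
              ProbabilityMeasure (S × W × A1)) × (S × W × A1) =>
              stepTest P0c P1c rq.1.1.1 rq.1.1.2 t f rq.2 from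
            hS.comp ((continuous_fst.comp continuous_fst).prodMk continuous_snd))
          continuous_snd
      have hR : Tendsto
          (fun n => ∫ q, stepTest P0c P1c (α0seq n) (μseq n) t f q
            ∂((vseq n).1 t : Measure (S × W × A1)))
          atTop (𝓝 (∫ q, stepTest P0c P1c α0 μf t f q ∂(v.1 t : Measure (S × W × A1)))) :=
        (hΦ.tendsto _).comp (hp.prodMk_nhds (hv1 t))
      exact tendsto_nhds_unique (hL.congr fun n => (hv n).2.2.1 t ht f hf) hR
    · intro hT f hf
      have hL : Tendsto
          (fun n => ∫ q : S × W, f q.1 q.2 ∂((vseq n).2 : Measure (S × W)))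
          atTop (𝓝 (∫ q : S × W, f q.1 q.2 ∂(v.2 : Measure (S × W)))) :=
        ((continuous_integral_PM hf).tendsto _).comp hv2
      set t' : Fin T := ⟨T - 1, Nat.sub_lt hT Nat.one_pos⟩ with ht'
      have hS := continuous_stepTest P0c P1c hP1c hP0c t' hf
      have hΦ : Continuous fun r : ((Fin T → W → ProbabilityMeasure A0) ×
          ((Fin T → W → ProbabilityMeasure (S × A1)) × (W → ProbabilityMeasure S))) ×
          ProbabilityMeasure (S × W × A1) =>
          ∫ q, stepTest P0c P1c r.1.1 r.1.2 t' f q ∂(r.2 : Measure (S × W × A1)) :=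
        continuous_integral_param (f := fun (r : ((Fin T → W → ProbabilityMeasure A0) ×
            ((Fin T → W → ProbabilityMeasure (S × A1)) × (W → ProbabilityMeasure S))) ×
            ProbabilityMeasure (S × W × A1)) (q : S × W × A1) => stepTest P0c P1c r.1.1 r.1.2 t' f q)
          (show Continuous fun rq : (((Fin T → W → ProbabilityMeasure A0) ×
              ((Fin T → W → ProbabilityMeasure (S × A1)) × (W → ProbabilityMeasure S))) ×
              ProbabilityMeasure (S × W × A1)) × (S × W × A1) =>
              stepTest P0c P1c rq.1.1.1 rq.1.1.2 t' f rq.2 from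
            hS.comp ((continuous_fst.comp continuous_fst).prodMk continuous_snd))
          continuous_snd
      have hR : Tendsto
          (fun n => ∫ q, stepTest P0c P1c (α0seq n) (μseq n) t' f q
            ∂((vseq n).1 t' : Measure (S × W × A1)))
          atTop (𝓝 (∫ q, stepTest P0c P1c α0 μf t' f q ∂(v.1 t' : Measure (S × W × A1)))) :=
        (hΦ.tendsto _).comp (hp.prodMk_nhds (hv1 t'))
      exact tendsto_nhds_unique (hL.congr fun n => (hv n).2.2.2 hT f hf) hR
end

section
/- In the control framework, under the continuity assumptions on P^0 (in (a,μ)) and on P^1, f^1 and g^1, if (α^{0,n},μ^n) → (α^0,μ) in 𝒜^0×C_μ, then for each t ∈ 𝕋 the minor player's value functions converge uniformly: sup_{(x,u)∈S×W} |V^{1,α^{0,n},μ^n}_t(x,u) − V^{1,α^0,μ}_t(x,u)| → 0 as n → ∞. -/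
open MeasureTheory Filter Topology
open scoped NNReal ENNReal

section ControlFramework

variable {S W A0 A1 : Type*}
variable [MetricSpace S] [CompactSpace S] [Nonempty S]
  [MeasurableSpace S] [BorelSpace S] [SecondCountableTopology S]
variable [Fintype W] [Nonempty W] [TopologicalSpace W] [DiscreteTopology W]
  [MeasurableSpace W] [BorelSpace W]
variable [MetricSpace A0] [CompactSpace A0] [Nonempty A0] [MeasurableSpace A0] [BorelSpace A0]
variable [MetricSpace A1] [CompactSpace A1] [Nonempty A1] [MeasurableSpace A1] [BorelSpace A1]
  [SecondCountableTopology A1]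
variable {T : ℕ}

variable (P0c : Fin T → W → A0 → ProbabilityMeasure (S × A1) → ProbabilityMeasure W)
variable (P1c : Fin T → S → W → A1 → ProbabilityMeasure (S × A1) → ProbabilityMeasure S)
variable (f1 : Fin T → S → W → A1 → ProbabilityMeasure (S × A1) → ℝ)
variable (g1 : S → W → ProbabilityMeasure S → ℝ)

/-- Pairing of a continuous function on a compact space with probability measures is
jointly continuous. -/
lemma myPairing_continuous {X : Type*} [TopologicalSpace X] [CompactSpace X]
    [MeasurableSpace X] [OpensMeasurableSpace X] :
    Continuous fun z : C(X, ℝ) × ProbabilityMeasure X =>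
      ∫ x, z.1 x ∂(z.2 : Measure X) := by
  apply continuous_prod_of_continuous_lipschitzWith _ 1
  · intro g
    exact (ProbabilityMeasure.continuous_integral_boundedContinuousFunction
      (BoundedContinuousFunction.mkOfCompact g)).congr (fun ρ => rfl)
  · intro ρ
    apply LipschitzWith.of_dist_le_mul
    intro g g'
    rw [NNReal.coe_one, one_mul, Real.dist_eq]
    have h1 : Integrable (BoundedContinuousFunction.mkOfCompact g) (ρ : Measure X) :=
      BoundedContinuousFunction.integrable _ _
    have h2 : Integrable (BoundedContinuousFunction.mkOfCompact g') (ρ : Measure X) :=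
      BoundedContinuousFunction.integrable _ _
    have : (∫ x, g x ∂(ρ : Measure X)) - (∫ x, g' x ∂(ρ : Measure X)) =
        ∫ x, (BoundedContinuousFunction.mkOfCompact g -
          BoundedContinuousFunction.mkOfCompact g') x ∂(ρ : Measure X) := by
      simp only [BoundedContinuousFunction.coe_sub, Pi.sub_apply]
      rw [integral_sub h1 h2]
      rfl
    rw [this]
    calc ‖∫ x, (BoundedContinuousFunction.mkOfCompact g -
          BoundedContinuousFunction.mkOfCompact g') x ∂(ρ : Measure X)‖
        ≤ ‖BoundedContinuousFunction.mkOfCompact g -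
            BoundedContinuousFunction.mkOfCompact g'‖ :=
          BoundedContinuousFunction.norm_integral_le_norm _ _
      _ = dist g g' := by
          rw [← BoundedContinuousFunction.dist_mkOfCompact, dist_eq_norm]

/-- The supremum functional on continuous functions on a compact space is continuous. -/
lemma myCiSup_continuous {X : Type*} [TopologicalSpace X] [CompactSpace X] [Nonempty X] :
    Continuous fun g : C(X, ℝ) => ⨆ x, g x := by
  have : LipschitzWith 1 fun g : C(X, ℝ) => ⨆ x, g x := by
    apply LipschitzWith.of_dist_le_mul
    intro g g'
    rw [NNReal.coe_one, one_mul, Real.dist_eq, abs_sub_le_iff]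
    have key : ∀ h h' : C(X, ℝ), (⨆ x, h x) - (⨆ x, h' x) ≤ dist h h' := by
      intro h h'
      have hb : BddAbove (Set.range fun x => h' x) :=
        (isCompact_range h'.continuous).bddAbove
      have : (⨆ x, h x) ≤ (⨆ x, h' x) + dist h h' := by
        apply ciSup_le
        intro x
        have hd := ContinuousMap.dist_apply_le_dist (f := h) (g := h') x
        rw [Real.dist_eq] at hd
        have h2 : h x ≤ h' x + dist h h' := by
          linarith [(abs_sub_le_iff.mp hd).1]
        exact h2.trans (by gcongr; exact le_ciSup hb x)
      linarith
    exact ⟨key g g', by rw [dist_comm]; exact key g' g⟩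
  exact this.continuous

/-- Joint continuity plus convergence of the parameter gives uniform convergence on a
compact space. -/
lemma myTendstoUniformly {P Y : Type*} [TopologicalSpace P] [CompactSpace P]
    [TopologicalSpace Y] {F : P → Y → ℝ} (hF : Continuous fun z : P × Y => F z.1 z.2)
    {y : ℕ → Y} {y0 : Y} (hy : Tendsto y atTop (𝓝 y0)) :
    TendstoUniformly (fun n p => F p (y n)) (fun p => F p y0) atTop := by
  have hswap : Continuous fun z : Y × P => F z.2 z.1 := hF.comp continuous_swap
  let G : C(Y, C(P, ℝ)) := ContinuousMap.curry ⟨_, hswap⟩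
  have hG : Tendsto (fun n => G (y n)) atTop (𝓝 (G y0)) :=
    (G.continuous.tendsto y0).comp hy
  exact ContinuousMap.tendsto_iff_tendstoUniformly.mp hG

/-- A function on a product with a discrete space is continuous if each slice is. -/
lemma myContinuous_of_slices {X W' : Type*} [TopologicalSpace X] [TopologicalSpace W']
    [DiscreteTopology W'] {f : X → W' → ℝ} (h : ∀ u, Continuous fun x => f x u) :
    Continuous fun p : X × W' => f p.1 p.2 := by
  rw [continuous_iff_continuousAt]
  rintro ⟨x, u⟩
  have hmem : {p : X × W' | p.2 = u} ∈ 𝓝 (x, u) := by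
    have : IsOpen {p : X × W' | p.2 = u} :=
      (isOpen_discrete ({u} : Set W')).preimage continuous_snd
    exact this.mem_nhds rfl
  refine ContinuousAt.congr (((h u).comp continuous_fst).continuousAt) ?_
  filter_upwards [hmem] with p hp
  simp only [Function.comp_apply]
  rw [show p.2 = u from hp]

/-- Continuity of the evaluation of a probability measure at a point of a discrete space. -/
lemma myPoint_continuous {W' : Type*} [Finite W'] [TopologicalSpace W'] [DiscreteTopology W']
    [MeasurableSpace W'] [OpensMeasurableSpace W'] (u' : W') :
    Continuous fun ρ : ProbabilityMeasure W' => ((ρ : Measure W') {u'}).toReal := by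
  let g : BoundedContinuousFunction W' ℝ :=
    BoundedContinuousFunction.mkOfCompact ⟨Set.indicator {u'} (fun _ => (1 : ℝ)),
      continuous_of_discreteTopology⟩
  have hcont : Continuous fun ρ : ProbabilityMeasure W' => ∫ w, g w ∂(ρ : Measure W') :=
    ProbabilityMeasure.continuous_integral_boundedContinuousFunction g
  refine hcont.congr fun ρ => ?_
  have hmeas : MeasurableSet ({u'} : Set W') :=
    (isOpen_discrete ({u'} : Set W')).measurableSet
  have : ∫ w, g w ∂(ρ : Measure W') =
      ∫ w, Set.indicator {u'} (fun _ => (1 : ℝ)) w ∂(ρ : Measure W') := rfl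
  rw [this, integral_indicator_const _ hmeas, smul_eq_mul, mul_one]
  rfl

set_option maxHeartbeats 2000000 in
set_option synthInstance.maxHeartbeats 2000000 in
set_option synthInstance.maxSize 4000 in
/-- Joint continuity of the backward-induction value functions in
`(control, mean-field flow, state, major state)`. -/
lemma Vauxc_jointly_continuous
    (hP1c : ∀ (t : Fin T) (u : W), Continuous fun z : S × A1 × ProbabilityMeasure (S × A1) =>
      P1c t z.1 u z.2.1 z.2.2)
    (hP0c : ∀ (t : Fin T) (u : W), Continuous fun z : A0 × ProbabilityMeasure (S × A1) =>
      P0c t u z.1 z.2)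
    (hf1 : ∀ (t : Fin T) (u : W), Continuous fun z : S × A1 × ProbabilityMeasure (S × A1) =>
      f1 t z.1 u z.2.1 z.2.2)
    (hg1 : ∀ u : W, Continuous fun z : S × ProbabilityMeasure S => g1 z.1 u z.2)
    (j : ℕ) :
    Continuous fun z :
        (((Fin T → W → ProbabilityMeasure A0) ×
          ((Fin T → W → ProbabilityMeasure (S × A1)) × (W → ProbabilityMeasure S))) × S) × W =>
      Vauxc P0c P1c f1 g1 z.1.1.1 z.1.1.2 j z.1.2 z.2 := by
  induction j with
  | zero =>
    refine myContinuous_of_slices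
      (f := fun (p : (((Fin T → W → ProbabilityMeasure A0) ×
          ((Fin T → W → ProbabilityMeasure (S × A1)) × (W → ProbabilityMeasure S))) × S)) u => Vauxc P0c P1c f1 g1 p.1.1 p.1.2 0 p.2 u) ?_
    intro u
    show Continuous fun p :
        ((Fin T → W → ProbabilityMeasure A0) ×
          ((Fin T → W → ProbabilityMeasure (S × A1)) × (W → ProbabilityMeasure S))) × S =>
      g1 p.2 u (p.1.2.2 u)
    exact (hg1 u).comp (continuous_snd.prodMk
      ((continuous_apply u).comp (continuous_snd.comp (continuous_snd.comp continuous_fst))))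
  | succ j IH =>
    refine myContinuous_of_slices
      (f := fun (p : (((Fin T → W → ProbabilityMeasure A0) ×
          ((Fin T → W → ProbabilityMeasure (S × A1)) × (W → ProbabilityMeasure S))) × S)) u => Vauxc P0c P1c f1 g1 p.1.1 p.1.2 (j + 1) p.2 u) ?_
    intro u
    by_cases h : T - (j + 1) < T
    · have heq : (fun p :
          ((Fin T → W → ProbabilityMeasure A0) ×
            ((Fin T → W → ProbabilityMeasure (S × A1)) × (W → ProbabilityMeasure S))) × S =>
          Vauxc P0c P1c f1 g1 p.1.1 p.1.2 (j + 1) p.2 u) =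
          fun p => ⨆ a : A1,
            (f1 ⟨T - (j + 1), h⟩ p.2 u a (p.1.2.1 ⟨T - (j + 1), h⟩ u) +
              ∑ u' : W, pi0c P0c ⟨T - (j + 1), h⟩ u (p.1.1 ⟨T - (j + 1), h⟩ u)
                  (p.1.2.1 ⟨T - (j + 1), h⟩ u) u' *
                ∫ x', Vauxc P0c P1c f1 g1 p.1.1 p.1.2 j x' u'
                  ∂(P1c ⟨T - (j + 1), h⟩ p.2 u a (p.1.2.1 ⟨T - (j + 1), h⟩ u) : Measure S)) := by
        funext p
        simp only [Vauxc, dif_pos h]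
      rw [heq]
      set t' : Fin T := ⟨T - (j + 1), h⟩
      -- joint continuity of the Bellman integrand
      have hQ : Continuous fun z :
          ((((Fin T → W → ProbabilityMeasure A0) ×
            ((Fin T → W → ProbabilityMeasure (S × A1)) × (W → ProbabilityMeasure S))) × S) × A1) =>
          (f1 t' z.1.2 u z.2 (z.1.1.2.1 t' u) +
            ∑ u' : W, pi0c P0c t' u (z.1.1.1 t' u) (z.1.1.2.1 t' u) u' *
              ∫ x', Vauxc P0c P1c f1 g1 z.1.1.1 z.1.1.2 j x' u'
                ∂(P1c t' z.1.2 u z.2 (z.1.1.2.1 t' u) : Measure S)) := by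
        have hmu : Continuous fun z :
            ((((Fin T → W → ProbabilityMeasure A0) ×
              ((Fin T → W → ProbabilityMeasure (S × A1)) × (W → ProbabilityMeasure S))) × S) × A1) =>
            z.1.1.2.1 t' u :=
          (continuous_apply u).comp ((continuous_apply t').comp
            (continuous_fst.comp (continuous_snd.comp (continuous_fst.comp continuous_fst))))
        apply Continuous.add
        · exact (hf1 t' u).comp
            (((continuous_snd.comp continuous_fst)).prodMk (continuous_snd.prodMk hmu))
        · apply continuous_finset_sum
          intro u' _
          apply Continuous.mul
          · -- continuity of the `pi0c` factor
            have hψ : Continuous fun w : ProbabilityMeasure (S × A1) × A0 =>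
                ((P0c t' u w.2 w.1 : Measure W) {u'}).toReal :=
              (myPoint_continuous u').comp ((hP0c t' u).comp continuous_swap)
            have hpair : Continuous fun w :
                ProbabilityMeasure (S × A1) × ProbabilityMeasure A0 =>
                ∫ a, ((ContinuousMap.curry ⟨_, hψ⟩ w.1 : C(A0, ℝ))) a ∂(w.2 : Measure A0) :=
              (myPairing_continuous (X := A0)).comp
                (((ContinuousMap.curry ⟨_, hψ⟩).continuous.comp continuous_fst).prodMk
                  continuous_snd)
            have halpha : Continuous fun z :
                ((((Fin T → W → ProbabilityMeasure A0) ×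
                  ((Fin T → W → ProbabilityMeasure (S × A1)) × (W → ProbabilityMeasure S))) × S) × A1) =>
                z.1.1.1 t' u :=
              (continuous_apply u).comp ((continuous_apply t').comp
                (continuous_fst.comp (continuous_fst.comp continuous_fst)))
            have := hpair.comp (hmu.prodMk halpha)
            simp only [pi0c]
            exact this
          · -- continuity of the continuation-value integral
            have hV : Continuous fun q :
                (((Fin T → W → ProbabilityMeasure A0) ×
                  ((Fin T → W → ProbabilityMeasure (S × A1)) × (W → ProbabilityMeasure S))) × S) =>
                Vauxc P0c P1c f1 g1 q.1.1 q.1.2 j q.2 u' :=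
              IH.comp (continuous_id.prodMk continuous_const)
            have hker : Continuous fun z :
                ((((Fin T → W → ProbabilityMeasure A0) ×
                  ((Fin T → W → ProbabilityMeasure (S × A1)) × (W → ProbabilityMeasure S))) × S) × A1) =>
                P1c t' z.1.2 u z.2 (z.1.1.2.1 t' u) :=
              (hP1c t' u).comp
                ((continuous_snd.comp continuous_fst).prodMk (continuous_snd.prodMk hmu))
            have key : Continuous fun z :
                ((((Fin T → W → ProbabilityMeasure A0) ×
                  ((Fin T → W → ProbabilityMeasure (S × A1)) × (W → ProbabilityMeasure S))) × S) × A1) =>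
                ∫ x', (ContinuousMap.curry (⟨_, hV⟩ :
                    C((((Fin T → W → ProbabilityMeasure A0) ×
                      ((Fin T → W → ProbabilityMeasure (S × A1)) ×
                        (W → ProbabilityMeasure S)))) × S, ℝ)) z.1.1) x'
                  ∂((P1c t' z.1.2 u z.2 (z.1.1.2.1 t' u)) : Measure S) :=
              (myPairing_continuous (X := S)).comp
                (((ContinuousMap.curry (⟨_, hV⟩ :
                  C((((Fin T → W → ProbabilityMeasure A0) ×
                    ((Fin T → W → ProbabilityMeasure (S × A1)) ×
                      (W → ProbabilityMeasure S)))) × S, ℝ))).continuous.comp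
                  (continuous_fst.comp continuous_fst)).prodMk hker)
            exact key
      have hQc : Continuous fun p :
          ((Fin T → W → ProbabilityMeasure A0) ×
            ((Fin T → W → ProbabilityMeasure (S × A1)) × (W → ProbabilityMeasure S))) × S =>
          (ContinuousMap.curry (⟨_, hQ⟩ : C(_ × A1, ℝ))) p :=
        (ContinuousMap.curry _).continuous
      exact myCiSup_continuous.comp hQc
    · have heq : (fun p :
          ((Fin T → W → ProbabilityMeasure A0) ×
            ((Fin T → W → ProbabilityMeasure (S × A1)) × (W → ProbabilityMeasure S))) × S =>
          Vauxc P0c P1c f1 g1 p.1.1 p.1.2 (j + 1) p.2 u) =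
          fun p => g1 p.2 u (p.1.2.2 u) := by
        funext p
        simp only [Vauxc, dif_neg h]
      rw [heq]
      exact (hg1 u).comp (continuous_snd.prodMk
        ((continuous_apply u).comp (continuous_snd.comp (continuous_snd.comp continuous_fst))))


end ControlFramework

set_option maxHeartbeats 2000000 in
set_option synthInstance.maxHeartbeats 2000000 in
set_option synthInstance.maxSize 4000 in
/-- STATEMENT 18: In the control framework, under the continuity assumptions on `P⁰`
(in `(a,μ)`) and on `P¹`, `f¹` and `g¹`, if `(α⁰ⁿ,μⁿ) → (α⁰,μ)` in `𝒜⁰ × C_μ`, then for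
each `t ∈ 𝕋` the minor player's value functions converge uniformly:
`sup_{(x,u) ∈ S×W} |V^{1,α⁰ⁿ,μⁿ}_t(x,u) − V^{1,α⁰,μ}_t(x,u)| → 0`. -/
theorem minor_value_functions_converge_uniformly
    {S W A0 A1 : Type*}
    [MetricSpace S] [CompactSpace S] [Nonempty S]
    [MeasurableSpace S] [BorelSpace S] [SecondCountableTopology S]
    [Fintype W] [Nonempty W] [TopologicalSpace W] [DiscreteTopology W]
    [MeasurableSpace W] [BorelSpace W]
    [MetricSpace A0] [CompactSpace A0] [Nonempty A0] [MeasurableSpace A0] [BorelSpace A0]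
    [MetricSpace A1] [CompactSpace A1] [Nonempty A1] [MeasurableSpace A1] [BorelSpace A1]
    [SecondCountableTopology A1]
    {T : ℕ}
    (P0c : Fin T → W → A0 → ProbabilityMeasure (S × A1) → ProbabilityMeasure W)
    (P1c : Fin T → S → W → A1 → ProbabilityMeasure (S × A1) → ProbabilityMeasure S)
    (f1 : Fin T → S → W → A1 → ProbabilityMeasure (S × A1) → ℝ)
    (g1 : S → W → ProbabilityMeasure S → ℝ)
    -- continuity of the minor player's transition kernel in (x,a,μ)
    (hP1c : ∀ (t : Fin T) (u : W), Continuous fun z : S × A1 × ProbabilityMeasure (S × A1) =>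
      P1c t z.1 u z.2.1 z.2.2)
    -- continuity of the major player's transition kernel in (a,μ)
    (hP0c : ∀ (t : Fin T) (u : W), Continuous fun z : A0 × ProbabilityMeasure (S × A1) =>
      P0c t u z.1 z.2)
    -- continuity of the minor player's rewards
    (hf1 : ∀ (t : Fin T) (u : W), Continuous fun z : S × A1 × ProbabilityMeasure (S × A1) =>
      f1 t z.1 u z.2.1 z.2.2)
    (hg1 : ∀ u : W, Continuous fun z : S × ProbabilityMeasure S => g1 z.1 u z.2)
    (α0seq : ℕ → Fin T → W → ProbabilityMeasure A0)
    (α0 : Fin T → W → ProbabilityMeasure A0)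
    (μseq : ℕ → (Fin T → W → ProbabilityMeasure (S × A1)) × (W → ProbabilityMeasure S))
    (μf : (Fin T → W → ProbabilityMeasure (S × A1)) × (W → ProbabilityMeasure S))
    (hα0 : Tendsto α0seq atTop (𝓝 α0))
    (hμ : Tendsto μseq atTop (𝓝 μf)) :
    ∀ t ≤ T, TendstoUniformly
      (fun n (q : S × W) => Vtimec P0c P1c f1 g1 (α0seq n) (μseq n) t q.1 q.2)
      (fun q : S × W => Vtimec P0c P1c f1 g1 α0 μf t q.1 q.2) atTop := by
  intro t _
  have hz : Tendsto (fun n => (α0seq n, μseq n)) atTop (𝓝 (α0, μf)) :=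
    hα0.prodMk_nhds hμ
  have hcont := Vauxc_jointly_continuous P0c P1c f1 g1 hP1c hP0c hf1 hg1 (T - t)
  have hF : Continuous fun z : (S × W) × ((Fin T → W → ProbabilityMeasure A0) ×
      ((Fin T → W → ProbabilityMeasure (S × A1)) × (W → ProbabilityMeasure S))) =>
      Vauxc P0c P1c f1 g1 z.2.1 z.2.2 (T - t) z.1.1 z.1.2 :=
    hcont.comp ((Continuous.prodMk continuous_snd
      (continuous_fst.comp continuous_fst)).prodMk (continuous_snd.comp continuous_fst))
  have key := myTendstoUniformly
    (F := fun (q : S × W) y => Vauxc P0c P1c f1 g1 y.1 y.2 (T - t) q.1 q.2) hF hz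
  exact key
end
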